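/- Let K > 0, let b ∈ [0, 1/(4√K)], c ∈ [0, π/(2√K)], A ∈ [0, π], and let a ∈ [0, π/√K] be such that cos(√K · a) = cos(√K · b) · cos(√K · c) + sin(√K · b) · sin(√K · c) · cos A. Let ā ≥ 0 be defined by ā² = b² + c² − 2 b c cos A. Then a² ≤ ā² ≤ (1 + 2 K b²) a². -/

import Mathlib

open Real Set

private lemma lemA {x : ℝ} (h0 : 0 ≤ x) (h1 : x ≤ Real.pi) :
    x * Real.cos x ≤ Real.sin x := by
  have key : MonotoneOn (fun x => Real.sin x - x * Real.cos x) (Icc 0 π) := by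
    apply monotoneOn_of_hasDerivWithinAt_nonneg (convex_Icc 0 π)
      (f' := fun x => x * Real.sin x)
    · exact (Real.continuous_sin.sub (continuous_id.mul Real.continuous_cos)).continuousOn
    · intro y _
      have h : HasDerivAt (fun x => Real.sin x - x * Real.cos x) (y * Real.sin y) y := by
        have h := (Real.hasDerivAt_sin y).sub ((hasDerivAt_id y).mul (Real.hasDerivAt_cos y))
        refine h.congr_deriv (Eq.symm ?_) <;> simp [id_eq] <;> ring
      exact h.hasDerivWithinAt
    · intro y hy
      rw [interior_Icc] at hy
      exact mul_nonneg hy.1.le (Real.sin_nonneg_of_nonneg_of_le_pi hy.1.le hy.2.le)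
  have h2 := key (left_mem_Icc.2 Real.pi_pos.le) ⟨h0, h1⟩ h0
  simpa using h2


private lemma sin_lb {x : ℝ} (h1 : 6/5 ≤ x) (h2 : x ≤ 8/5) : (0.93:ℝ) ≤ Real.sin x := by
  have h := Real.cos_pi_div_two_sub x
  have hb := Real.one_sub_sq_div_two_le_cos (x := π/2 - x)
  have hπ := Real.pi_gt_d6
  have hπ' := Real.pi_lt_d6
  have hle : π/2 - x ≤ 0.3708 := by norm_num at hπ' ⊢; linarith
  have hge : -(0.3708) ≤ π/2 - x := by norm_num at hπ ⊢; linarith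
  have hsq : (π/2 - x)^2 ≤ 0.3708^2 := sq_le_sq' hge hle
  norm_num at hsq hb ⊢
  linarith

set_option maxHeartbeats 1000000 in
private lemma lemB {x : ℝ} (h0 : 0 ≤ x) (h1 : x ≤ 1/4 + Real.pi/2) :
    Real.sin x - x * Real.cos x ≤ 2 * Real.sin x ^ 3 := by
  have hπ := Real.pi_gt_d6
  have hπ' := Real.pi_lt_d6
  have hcont : Continuous (fun y => 2 * Real.sin y ^ 3 - Real.sin y + y * Real.cos y) := by
    continuity
  have hD : ∀ y : ℝ, HasDerivAt (fun y => 2 * Real.sin y ^ 3 - Real.sin y + y * Real.cos y)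
      (Real.sin y * (6 * Real.sin y * Real.cos y - y)) y := by
    intro y
    have h := ((((Real.hasDerivAt_sin y).pow 3).const_mul 2).sub (Real.hasDerivAt_sin y)).add
      ((hasDerivAt_id y).mul (Real.hasDerivAt_cos y))
    refine h.congr_deriv (Eq.symm ?_)
    simp [id_eq]
    ring
  suffices h : 0 ≤ 2 * Real.sin x ^ 3 - Real.sin x + x * Real.cos x by linarith
  rcases le_total x (6/5) with hx | hx
  · -- region 1 : monotone increasing
    have mono : MonotoneOn (fun y => 2 * Real.sin y ^ 3 - Real.sin y + y * Real.cos y)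
        (Icc 0 (6/5)) := by
      apply monotoneOn_of_hasDerivWithinAt_nonneg (convex_Icc _ _) hcont.continuousOn
        (fun y _ => (hD y).hasDerivWithinAt)
      intro y hy
      rw [interior_Icc] at hy
      have hsy : 0 ≤ Real.sin y := Real.sin_nonneg_of_nonneg_of_le_pi hy.1.le
        (by norm_num at hπ ⊢; linarith [hy.2])
      have hchord : Real.sin (2*y) ≥ (5*y/6) * Real.sin (12/5) := by
        have hm1 : (0:ℝ) ∈ Icc (0:ℝ) π := left_mem_Icc.2 Real.pi_pos.le
        have hm2 : (12/5:ℝ) ∈ Icc (0:ℝ) π := ⟨by norm_num, by norm_num at hπ ⊢; linarith⟩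
        have ha0 : (0:ℝ) ≤ 1 - 5*y/6 := by nlinarith [hy.2]
        have hb0 : (0:ℝ) ≤ 5*y/6 := by nlinarith [hy.1]
        have hc := strictConcaveOn_sin_Icc.concaveOn.2 hm1 hm2 ha0 hb0 (by ring)
        simp only [smul_eq_mul] at hc
        have harg : (1 - 5*y/6) * 0 + 5*y/6 * (12/5) = 2*y := by ring
        rw [harg, Real.sin_zero] at hc
        linarith
      have hs24 : (2:ℝ)/5 ≤ Real.sin (12/5) := by
        rw [show (12:ℝ)/5 = π - (π - 12/5) by ring, Real.sin_pi_sub]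
        have hgt : (0.74:ℝ) < π - 12/5 := by norm_num at hπ ⊢; linarith
        have hlt : π - 12/5 ≤ (0.7416:ℝ) := by norm_num at hπ' ⊢; linarith
        have hcube := Real.sin_gt_sub_cube (by linarith : (0:ℝ) < π - 12/5)
        have hz0 : (0:ℝ) < π - 12/5 := by linarith
        have hz2 : (π - 12/5)^2 ≤ (0.7416:ℝ)^2 := by nlinarith [hlt, hz0]
        have hz3 : (π - 12/5)^3 ≤ (0.7416:ℝ)^3 := by nlinarith [hz2, hlt, hz0]
        norm_num at hz3 hcube ⊢
        nlinarith [hz3, hcube, hgt]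
      have key : y ≤ 3 * Real.sin (2*y) := by nlinarith [hchord, hs24, hy.1]
      have h2 : Real.sin (2*y) = 2 * Real.sin y * Real.cos y := Real.sin_two_mul y
      have : 0 ≤ 6 * Real.sin y * Real.cos y - y := by nlinarith [key, h2]
      exact mul_nonneg hsy this
    have h2 := mono (left_mem_Icc.2 (by norm_num)) ⟨h0, hx⟩ h0
    simpa using h2
  rcases le_total x (8/5) with hx2 | hx2
  · -- region 2 : direct bound
    have hs1 : Real.sin x ≤ 1 := Real.sin_le_one x
    have hs93 : (0.93:ℝ) ≤ Real.sin x := sin_lb hx hx2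
    have hcos : -(0.03:ℝ) ≤ Real.cos x := by
      rcases le_total x (π/2) with h | h
      · have : 0 ≤ Real.cos x := Real.cos_nonneg_of_mem_Icc ⟨by linarith, h⟩
        linarith
      · have heq : Real.cos x = -Real.sin (x - π/2) := by
          rw [Real.sin_sub_pi_div_two]; ring
        have hz : x - π/2 ≤ 0.03 := by norm_num at hπ ⊢; linarith
        have hz0 : 0 ≤ x - π/2 := by linarith
        have : Real.sin (x - π/2) ≤ x - π/2 := Real.sin_le hz0
        rw [heq]; linarith
    have hxc : -(0.048:ℝ) ≤ x * Real.cos x := by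
      rcases le_total 0 (Real.cos x) with h | h
      · nlinarith
      · nlinarith [hx2, hcos, h]
    nlinarith [hs93, hs1, hxc, sq_nonneg (Real.sin x - 0.93),
      mul_nonneg (sub_nonneg.2 hs93) (sq_nonneg (Real.sin x))]
  · -- region 3 : antitone, value at right end nonneg
    have anti : AntitoneOn (fun y => 2 * Real.sin y ^ 3 - Real.sin y + y * Real.cos y)
        (Icc (8/5) (1/4 + π/2)) := by
      apply antitoneOn_of_hasDerivWithinAt_nonpos (convex_Icc _ _) hcont.continuousOn
        (fun y _ => (hD y).hasDerivWithinAt)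
      intro y hy
      rw [interior_Icc] at hy
      have hyπ : y ≤ π := by norm_num at hπ ⊢; linarith [hy.2]
      have hsy : 0 ≤ Real.sin y := Real.sin_nonneg_of_nonneg_of_le_pi (by linarith [hy.1]) hyπ
      have h2y : Real.sin (2*y) ≤ 0 := by
        have hge : 0 ≤ 2*y - π := by norm_num at hπ' ⊢; linarith [hy.1]
        have hle : 2*y - π ≤ π := by linarith [hy.2, Real.pi_pos]
        have hnn := Real.sin_nonneg_of_nonneg_of_le_pi hge hle
        have hsub := Real.sin_sub_pi (2*y)
        linarith
      have h2 : Real.sin (2*y) = 2 * Real.sin y * Real.cos y := Real.sin_two_mul y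
      have hfac : 6 * Real.sin y * Real.cos y - y ≤ 0 := by nlinarith [h2y, h2, hy.1]
      exact mul_nonpos_of_nonneg_of_nonpos hsy hfac
    have hmem : (1/4 + π/2) ∈ Icc (8/5 : ℝ) (1/4 + π/2) :=
      right_mem_Icc.2 (by norm_num at hπ ⊢; linarith)
    have h2 := anti ⟨hx2, h1⟩ hmem h1
    have hend : 0 ≤ 2 * Real.sin (1/4 + π/2) ^ 3 - Real.sin (1/4 + π/2)
        + (1/4 + π/2) * Real.cos (1/4 + π/2) := by
      have hs : Real.sin (1/4 + π/2) = Real.cos (1/4) := Real.sin_add_pi_div_two (1/4)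
      have hc : Real.cos (1/4 + π/2) = -Real.sin (1/4) := Real.cos_add_pi_div_two (1/4)
      rw [hs, hc]
      have h31 : (31:ℝ)/32 ≤ Real.cos (1/4) := by
        have := Real.one_sub_sq_div_two_le_cos (x := (1/4:ℝ)); norm_num at this ⊢; linarith
      have hc1 : Real.cos (1/4) ≤ 1 := Real.cos_le_one _
      have hs4 : Real.sin (1/4) ≤ 1/4 := Real.sin_le (by norm_num)
      have hs40 : 0 ≤ Real.sin (1/4) :=
        Real.sin_nonneg_of_nonneg_of_le_pi (by norm_num) (by norm_num at hπ ⊢; linarith)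
      have hC3 : (0.81:ℝ) ≤ 2 * Real.cos (1/4) ^ 3 - Real.cos (1/4) := by
        nlinarith [h31, hc1, mul_nonneg (sub_nonneg.2 h31) (sub_nonneg.2 h31),
          sq_nonneg (Real.cos (1/4) - 31/32)]
      have hprod : (1/4 + π/2) * Real.sin (1/4) ≤ (0.46:ℝ) := by nlinarith [hs4, hs40, hπ']
      nlinarith [hC3, hprod]
    simp only at h2
    linarith [h2, hend]


noncomputable def Gf (y : ℝ) : ℝ := Real.arcsin (Real.sqrt y) ^ 2
noncomputable def Gf1 (y : ℝ) : ℝ :=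
  Real.arcsin (Real.sqrt y) / (Real.sqrt y * Real.sqrt (1 - y))
noncomputable def Gf2 (y : ℝ) : ℝ :=
  (Real.sqrt y * Real.sqrt (1 - y) - Real.arcsin (Real.sqrt y) * (1 - 2*y)) /
    (2 * (Real.sqrt y * Real.sqrt (1 - y)) ^ 3)

lemma sqrt_facts {y : ℝ} (h0 : 0 < y) (h1 : y < 1) :
    0 < Real.sqrt y ∧ Real.sqrt y < 1 ∧ 0 < Real.sqrt (1 - y) := by
  refine ⟨Real.sqrt_pos.2 h0, ?_, Real.sqrt_pos.2 (by linarith)⟩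
  have h := Real.sqrt_lt_sqrt h0.le h1
  simpa using h

lemma hasDerivAt_arcsin_sqrt {y : ℝ} (h0 : 0 < y) (h1 : y < 1) :
    HasDerivAt (fun z => Real.arcsin (Real.sqrt z))
      (1 / (2 * (Real.sqrt y * Real.sqrt (1 - y)))) y := by
  obtain ⟨hp, hp1, hq⟩ := sqrt_facts h0 h1
  have h := (Real.hasDerivAt_arcsin (by linarith : Real.sqrt y ≠ -1)
    hp1.ne).comp y (Real.hasDerivAt_sqrt h0.ne')
  refine h.congr_deriv (Eq.symm ?_)
  rw [Real.sq_sqrt h0.le]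
  field_simp

lemma hasDerivAt_Gf {y : ℝ} (h0 : 0 < y) (h1 : y < 1) : HasDerivAt Gf (Gf1 y) y := by
  obtain ⟨hp, hp1, hq⟩ := sqrt_facts h0 h1
  have h := (hasDerivAt_arcsin_sqrt h0 h1).pow 2
  refine h.congr_deriv (Eq.symm ?_)
  unfold Gf1
  field_simp
  ring

lemma hasDerivAt_Gf1 {y : ℝ} (h0 : 0 < y) (h1 : y < 1) : HasDerivAt Gf1 (Gf2 y) y := by
  obtain ⟨hp, hp1, hq⟩ := sqrt_facts h0 h1
  have hq1 : HasDerivAt (fun z : ℝ => Real.sqrt (1 - z)) (-(1 / (2 * Real.sqrt (1 - y)))) y := by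
    have h := (Real.hasDerivAt_sqrt (x := 1 - y) (by linarith)).comp y
      ((hasDerivAt_id y).const_sub 1)
    refine h.congr_deriv (Eq.symm ?_)
    field_simp
  have hden : HasDerivAt (fun z => Real.sqrt z * Real.sqrt (1 - z))
      ((1 / (2 * Real.sqrt y)) * Real.sqrt (1 - y)
        + Real.sqrt y * (-(1 / (2 * Real.sqrt (1 - y))))) y :=
    (Real.hasDerivAt_sqrt h0.ne').mul hq1
  have hden0 : Real.sqrt y * Real.sqrt (1 - y) ≠ 0 := by positivity
  have h := (hasDerivAt_arcsin_sqrt h0 h1).div hden hden0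
  refine h.congr_deriv (Eq.symm ?_)
  unfold Gf2
  have hpp : Real.sqrt y * Real.sqrt y = y := Real.mul_self_sqrt h0.le
  have hqq : Real.sqrt (1 - y) * Real.sqrt (1 - y) = 1 - y := Real.mul_self_sqrt (by linarith)
  field_simp
  linear_combination (Real.arcsin (Real.sqrt y)) * hqq
    - (Real.arcsin (Real.sqrt y)) * hpp

noncomputable def bb : ℝ := Real.sin (1/8 + Real.pi/4) ^ 2

lemma bb_facts : 0 < bb ∧ bb < 1 := by
  have hπ := Real.pi_gt_d6
  have hπ' := Real.pi_lt_d6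
  have harg0 : (0:ℝ) < 1/8 + π/4 := by norm_num at hπ ⊢; linarith
  have hargπ : 1/8 + π/4 < π/2 := by norm_num at hπ ⊢; linarith
  have hs0 : 0 < Real.sin (1/8 + π/4) :=
    Real.sin_pos_of_pos_of_lt_pi harg0 (by norm_num at hπ ⊢; linarith)
  have hs1 : Real.sin (1/8 + π/4) < 1 := by
    have h := Real.strictMonoOn_sin (a := 1/8 + π/4) (b := π/2)
      ⟨by norm_num at hπ ⊢; linarith, by linarith⟩
      ⟨by linarith [Real.pi_pos], le_refl _⟩ hargπ
    rwa [Real.sin_pi_div_two] at h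
  constructor
  · unfold bb; positivity
  · unfold bb; nlinarith [hs0, hs1]

lemma Gf2_nonneg {y : ℝ} (h0 : 0 < y) (hb : y < bb) : 0 ≤ Gf2 y := by
  have h1 : y < 1 := lt_trans hb bb_facts.2
  obtain ⟨hp, hp1, hq⟩ := sqrt_facts h0 h1
  set θ := Real.arcsin (Real.sqrt y) with hθ
  have hθ0 : 0 < θ := Real.arcsin_pos.2 hp
  have hθπ : θ ≤ π/2 := Real.arcsin_le_pi_div_two _
  have hsθ : Real.sin θ = Real.sqrt y := Real.sin_arcsin (by linarith) hp1.le
  have hcθ : Real.cos θ = Real.sqrt (1 - y) := by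
    rw [hθ, Real.cos_arcsin, Real.sq_sqrt h0.le]
  have hA := lemA (x := 2*θ) (by linarith) (by linarith [Real.pi_pos])
  rw [Real.sin_two_mul, Real.cos_two_mul', hsθ, hcθ, Real.sq_sqrt h0.le,
    Real.sq_sqrt (by linarith : (0:ℝ) ≤ 1 - y)] at hA
  unfold Gf2
  apply div_nonneg _ (by positivity)
  rw [← hθ]
  nlinarith [hA]

lemma theta_le {y : ℝ} (h0 : 0 < y) (hb : y < bb) :
    Real.arcsin (Real.sqrt y) ≤ 1/8 + Real.pi/4 := by
  have hπ := Real.pi_gt_d6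
  have harg0 : (0:ℝ) ≤ 1/8 + π/4 := by norm_num at hπ ⊢; linarith
  have hargπ : 1/8 + π/4 ≤ π/2 := by norm_num at hπ ⊢; linarith
  have hsb : Real.sqrt bb = Real.sin (1/8 + π/4) := by
    unfold bb
    exact Real.sqrt_sq (Real.sin_nonneg_of_nonneg_of_le_pi harg0 (by linarith [Real.pi_pos]))
  have h := Real.monotone_arcsin (le_of_lt (by
    have := Real.sqrt_lt_sqrt h0.le hb
    linarith : Real.sqrt y < Real.sqrt bb))
  rw [hsb, Real.arcsin_sin (by linarith) hargπ] at h
  exact h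

lemma Gf2_le_four {y : ℝ} (h0 : 0 < y) (hb : y < bb) : Gf2 y ≤ 4 := by
  have hπ := Real.pi_gt_d6
  have h1 : y < 1 := lt_trans hb bb_facts.2
  obtain ⟨hp, hp1, hq⟩ := sqrt_facts h0 h1
  set θ := Real.arcsin (Real.sqrt y) with hθ
  have hθ0 : 0 < θ := Real.arcsin_pos.2 hp
  have hθle : θ ≤ 1/8 + π/4 := theta_le h0 hb
  have hsθ : Real.sin θ = Real.sqrt y := Real.sin_arcsin (by linarith) hp1.le
  have hcθ : Real.cos θ = Real.sqrt (1 - y) := by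
    rw [hθ, Real.cos_arcsin, Real.sq_sqrt h0.le]
  have hB := lemB (x := 2*θ) (by linarith) (by norm_num at hπ ⊢; linarith)
  rw [Real.sin_two_mul, Real.cos_two_mul', hsθ, hcθ, Real.sq_sqrt h0.le,
    Real.sq_sqrt (by linarith : (0:ℝ) ≤ 1 - y)] at hB
  unfold Gf2
  rw [div_le_iff₀ (by positivity), ← hθ]
  nlinarith [hB]

lemma convexG : ConvexOn ℝ (Icc 0 bb) Gf := by
  apply convexOn_of_hasDerivWithinAt2_nonneg (convex_Icc _ _) (f' := Gf1) (f'' := Gf2)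
  · exact ((Real.continuous_arcsin.comp Real.continuous_sqrt).pow 2).continuousOn
  · intro x hx
    rw [interior_Icc] at hx
    exact (hasDerivAt_Gf hx.1 (lt_trans hx.2 bb_facts.2)).hasDerivWithinAt
  · intro x hx
    rw [interior_Icc] at hx
    exact (hasDerivAt_Gf1 hx.1 (lt_trans hx.2 bb_facts.2)).hasDerivWithinAt
  · intro x hx
    rw [interior_Icc] at hx
    exact Gf2_nonneg hx.1 hx.2

lemma convexH : ConvexOn ℝ (Icc 0 bb) (fun y => 2*y^2 - Gf y) := by
  apply convexOn_of_hasDerivWithinAt2_nonneg (convex_Icc _ _)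
    (f' := fun y => 4*y - Gf1 y) (f'' := fun y => 4 - Gf2 y)
  · apply ContinuousOn.sub
    · exact (continuous_const.mul (continuous_pow 2)).continuousOn
    · exact ((Real.continuous_arcsin.comp Real.continuous_sqrt).pow 2).continuousOn
  · intro x hx
    rw [interior_Icc] at hx
    have h1 : HasDerivAt (fun y : ℝ => 2*y^2) (4*x) x := by
      have := ((hasDerivAt_pow 2 x).const_mul 2)
      refine this.congr_deriv (Eq.symm ?_); ring
    exact (h1.sub (hasDerivAt_Gf hx.1 (lt_trans hx.2 bb_facts.2))).hasDerivWithinAt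
  · intro x hx
    rw [interior_Icc] at hx
    have h1 : HasDerivAt (fun y : ℝ => 4*y) (4:ℝ) x := by
      simpa using (hasDerivAt_id x).const_mul (4:ℝ)
    exact (h1.sub (hasDerivAt_Gf1 hx.1 (lt_trans hx.2 bb_facts.2))).hasDerivWithinAt
  · intro x hx
    rw [interior_Icc] at hx
    linarith [Gf2_le_four hx.1 hx.2]

private lemma lemE {t u ν : ℝ} (ht0 : 0 ≤ t) (ht : t ≤ 1/4) (hu0 : 0 ≤ u) (hu : u ≤ Real.pi/2)
    (hν0 : 0 ≤ ν) (hν1 : ν ≤ 1) :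
    ν*(1-ν)*(Real.sin t*Real.sin u)^2
      ≤ t^2*Real.sin ((u-t)/2)^2 + ν*t^2*(Real.sin t*Real.sin u) := by
  have hπ := Real.pi_gt_d6
  have hst0 : 0 ≤ Real.sin t :=
    Real.sin_nonneg_of_nonneg_of_le_pi ht0 (by norm_num at hπ ⊢; linarith)
  have hsu0 : 0 ≤ Real.sin u :=
    Real.sin_nonneg_of_nonneg_of_le_pi hu0 (by linarith [Real.pi_pos])
  have hD0 : 0 ≤ Real.sin t * Real.sin u := mul_nonneg hst0 hsu0
  set D := Real.sin t * Real.sin u with hDdef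
  by_cases hc : (1-ν)*D ≤ t^2
  · nlinarith [sq_nonneg (Real.sin ((u-t)/2)), mul_nonneg hν0 hD0, sq_nonneg t,
      mul_nonneg (mul_nonneg hν0 hD0) hD0]
  · push_neg at hc
    have hDt : t^2 < D := by nlinarith [mul_nonneg hν0 hD0]
    have hsint_le : Real.sin t ≤ t := Real.sin_le ht0
    have htu : t < u := by
      by_contra h
      push_neg at h
      have hmono : Real.sin u ≤ Real.sin t := by
        rcases eq_or_lt_of_le h with h' | h'
        · rw [h']
        · exact (Real.strictMonoOn_sin ⟨by linarith, by linarith⟩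
            ⟨by linarith [Real.pi_pos], by norm_num at hπ ⊢; linarith⟩ h').le
      nlinarith [hDt, hsint_le, hst0, hsu0]
    have hq0 : 0 ≤ Real.sin ((u-t)/2) :=
      Real.sin_nonneg_of_nonneg_of_le_pi (by linarith) (by norm_num at hπ ⊢; linarith)
    have key1 : D - t^2 ≤ 2*t*Real.sin ((u-t)/2) := by
      have h1 : D ≤ t * Real.sin u := by nlinarith [hsint_le, hsu0]
      have h2 : Real.sin u - Real.sin t = 2 * Real.sin ((u-t)/2) * Real.cos ((u+t)/2) :=
        Real.sin_sub_sin u t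
      have h3 : Real.cos ((u+t)/2) ≤ 1 := Real.cos_le_one _
      have h4 : t * Real.sin u - t^2 ≤ t*(Real.sin u - Real.sin t) := by
        nlinarith [hsint_le, ht0]
      nlinarith [h1, h2, h3, h4, hq0, ht0, mul_nonneg ht0 hq0]
    have key2 : (D - t^2)^2 ≤ (2*t*Real.sin ((u-t)/2))^2 := by
      have hDt' : 0 ≤ D - t^2 := by linarith
      nlinarith [key1, hDt', mul_nonneg (mul_nonneg (by norm_num : (0:ℝ) ≤ 2) ht0) hq0]
    nlinarith [key2, sq_nonneg (2*ν*D - (D - t^2))]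

set_option maxHeartbeats 1000000 in
private lemma curv1 {t u w s : ℝ} (ht0 : 0 ≤ t) (ht : t ≤ 1/4) (hu0 : 0 ≤ u)
    (hu : u ≤ Real.pi/2) (hw1 : -1 ≤ w) (hw2 : w ≤ 1) (hs0 : 0 ≤ s) (hs : s ≤ Real.pi)
    (hlaw : Real.cos s = Real.cos t * Real.cos u + Real.sin t * Real.sin u * w) :
    s^2 ≤ t^2 + u^2 - 2*t*u*w ∧ t^2 + u^2 - 2*t*u*w ≤ (1 + 2*t^2) * s^2 := by
  have hπ3 : (3:ℝ) < π := Real.pi_gt_three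
  set ν := (1 - w)/2 with hν
  have hw : w = 1 - 2*ν := by rw [hν]; ring
  have hν0 : 0 ≤ ν := by rw [hν]; linarith
  have hν1 : ν ≤ 1 := by rw [hν]; linarith
  set Y0 := Real.sin ((u - t)/2) ^ 2 with hY0def
  set Y1 := Real.sin ((u + t)/2) ^ 2 with hY1def
  have e0 : Y0 = 1/2 - Real.cos (u-t) / 2 := by
    rw [hY0def]
    have h := Real.sin_sq_eq_half_sub (x := (u-t)/2)
    rwa [show 2*((u-t)/2) = u - t by ring] at h
  have e1 : Y1 = 1/2 - Real.cos (u+t) / 2 := by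
    rw [hY1def]
    have h := Real.sin_sq_eq_half_sub (x := (u+t)/2)
    rwa [show 2*((u+t)/2) = u + t by ring] at h
  have es : Real.sin (s/2)^2 = 1/2 - Real.cos s / 2 := by
    have h := Real.sin_sq_eq_half_sub (x := s/2)
    rwa [show 2*(s/2) = s by ring] at h
  have key : Real.sin (s/2) ^ 2 = (1-ν) * Y0 + ν * Y1 := by
    rw [es, e0, e1, hlaw, Real.cos_sub, Real.cos_add, hν]
    ring
  -- memberships
  have hargb0 : (0:ℝ) ≤ 1/8 + π/4 := by linarith
  have hargbπ : 1/8 + π/4 ≤ π/2 := by linarith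
  have sin_mono : ∀ z : ℝ, -(1/8 + π/4) ≤ z → z ≤ 1/8 + π/4 →
      Real.sin z ^ 2 ≤ bb := by
    intro z hz1 hz2
    have hup : Real.sin z ≤ Real.sin (1/8 + π/4) := by
      rcases eq_or_lt_of_le hz2 with h' | h'
      · rw [h']
      · exact (Real.strictMonoOn_sin (a := z) (b := 1/8 + π/4)
          ⟨by linarith, by linarith⟩ ⟨by linarith, hargbπ⟩ h').le
    have hlo : -Real.sin (1/8 + π/4) ≤ Real.sin z := by
      rcases eq_or_lt_of_le hz1 with h' | h'
      · rw [← h', Real.sin_neg]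
      · have h2 := (Real.strictMonoOn_sin (a := -(1/8 + π/4)) (b := z)
          ⟨by linarith, by linarith⟩ ⟨by linarith, by linarith⟩ h').le
        rw [Real.sin_neg] at h2
        linarith
    have h3 := sq_le_sq' hlo hup
    unfold bb
    exact h3
  have hY0mem : Y0 ∈ Icc (0:ℝ) bb := by
    refine ⟨sq_nonneg _, ?_⟩
    rw [hY0def]
    exact sin_mono _ (by linarith) (by linarith)
  have hY1mem : Y1 ∈ Icc (0:ℝ) bb := by
    refine ⟨sq_nonneg _, ?_⟩
    rw [hY1def]
    exact sin_mono _ (by linarith) (by linarith)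
  -- G values
  have hsh0 : 0 ≤ Real.sin (s/2) :=
    Real.sin_nonneg_of_nonneg_of_le_pi (by linarith) (by linarith)
  have hGYν : Gf ((1-ν)*Y0 + ν*Y1) = (s/2)^2 := by
    rw [← key]
    unfold Gf
    rw [Real.sqrt_sq hsh0, Real.arcsin_sin (by linarith) (by linarith)]
  have hGY1 : Gf Y1 = ((u+t)/2)^2 := by
    unfold Gf
    rw [hY1def, Real.sqrt_sq (Real.sin_nonneg_of_nonneg_of_le_pi (by linarith)
        (by linarith)),
      Real.arcsin_sin (by linarith) (by linarith)]
  have hGY0 : Gf Y0 = ((u-t)/2)^2 := by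
    unfold Gf
    rcases le_total t u with h | h
    · rw [hY0def, Real.sqrt_sq (Real.sin_nonneg_of_nonneg_of_le_pi (by linarith)
          (by linarith)),
        Real.arcsin_sin (by linarith) (by linarith)]
    · have hneg : Real.sin ((u-t)/2) = -Real.sin ((t-u)/2) := by
        rw [show (u-t)/2 = -((t-u)/2) by ring, Real.sin_neg]
      rw [hY0def, hneg, neg_sq,
        Real.sqrt_sq (Real.sin_nonneg_of_nonneg_of_le_pi (by linarith)
          (by linarith)),
        Real.arcsin_sin (by linarith) (by linarith)]
      ring
  -- apply convexity
  have lower := convexG.2 hY0mem hY1mem (by linarith : (0:ℝ) ≤ 1-ν) hν0 (by ring)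
  simp only [smul_eq_mul] at lower
  rw [hGYν, hGY0, hGY1] at lower
  have upper := convexH.2 hY0mem hY1mem (by linarith : (0:ℝ) ≤ 1-ν) hν0 (by ring)
  simp only [smul_eq_mul] at upper
  constructor
  · rw [hw]
    linarith [lower]
  · -- upper bound
    have step1 : (1-ν)*((u-t)/2)^2 + ν*((u+t)/2)^2
        ≤ (s/2)^2 + 2*(ν*(1-ν)*(Y1-Y0)^2) := by
      have hup : 2*((1-ν)*Y0 + ν*Y1)^2 - Gf ((1-ν)*Y0 + ν*Y1)
          ≤ (1-ν)*(2*Y0^2 - Gf Y0) + ν*(2*Y1^2 - Gf Y1) := upper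
      rw [hGYν, hGY0, hGY1] at hup
      linarith [hup]
    have prodid : Y1 - Y0 = Real.sin t * Real.sin u := by
      rw [e0, e1, Real.cos_sub, Real.cos_add]
      ring
    have E := lemE ht0 ht hu0 hu hν0 hν1
    have step2 : ν*(1-ν)*(Y1-Y0)^2 ≤ t^2*Y0 + ν*t^2*(Y1-Y0) := by
      rw [prodid, hY0def]
      exact E
    have hsin_le : Real.sin (s/2) ≤ s/2 := Real.sin_le (by linarith)
    have step3 : Y0 + ν*(Y1-Y0) ≤ (s/2)^2 := by
      have h := pow_le_pow_left₀ hsh0 hsin_le 2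
      rw [key] at h
      linarith [h]
    have step3' := mul_le_mul_of_nonneg_left step3 (by positivity : (0:ℝ) ≤ 8*t^2)
    rw [hw]
    linarith [step1, step2, step3']

theorem spherical_distortion_curvature_K
    (K a b c A : ℝ) (hK : 0 < K)
    (hb : b ∈ Set.Icc (0 : ℝ) (1 / (4 * Real.sqrt K)))
    (hc : c ∈ Set.Icc (0 : ℝ) (Real.pi / (2 * Real.sqrt K)))
    (hA : A ∈ Set.Icc (0 : ℝ) Real.pi)
    (ha : a ∈ Set.Icc (0 : ℝ) (Real.pi / Real.sqrt K))
    (hlaw : Real.cos (Real.sqrt K * a)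
        = Real.cos (Real.sqrt K * b) * Real.cos (Real.sqrt K * c)
          + Real.sin (Real.sqrt K * b) * Real.sin (Real.sqrt K * c)
              * Real.cos A)
    (abar : ℝ) (habar : 0 ≤ abar)
    (habar2 : abar ^ 2 = b ^ 2 + c ^ 2 - 2 * b * c * Real.cos A) :
    a ^ 2 ≤ abar ^ 2 ∧ abar ^ 2 ≤ (1 + 2 * K * b ^ 2) * a ^ 2 := by
  obtain ⟨hb0, hbK⟩ := hb
  obtain ⟨hc0, hcK⟩ := hc
  obtain ⟨ha0, haK⟩ := ha
  have hK' : 0 < Real.sqrt K := Real.sqrt_pos.2 hK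
  have hKsq : Real.sqrt K ^ 2 = K := Real.sq_sqrt hK.le
  have ht : Real.sqrt K * b ≤ 1/4 := by
    have h := mul_le_mul_of_nonneg_left hbK hK'.le
    have h2 : Real.sqrt K * (1/(4*Real.sqrt K)) = 1/4 := by field_simp
    linarith
  have hu : Real.sqrt K * c ≤ π/2 := by
    have h := mul_le_mul_of_nonneg_left hcK hK'.le
    have h2 : Real.sqrt K * (π/(2*Real.sqrt K)) = π/2 := by field_simp
    linarith
  have hs : Real.sqrt K * a ≤ π := by
    have h := mul_le_mul_of_nonneg_left haK hK'.le
    have h2 : Real.sqrt K * (π/Real.sqrt K) = π := by field_simp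
    linarith
  have main := curv1 (mul_nonneg hK'.le hb0) ht (mul_nonneg hK'.le hc0) hu
    (Real.neg_one_le_cos A) (Real.cos_le_one A) (mul_nonneg hK'.le ha0) hs hlaw
  obtain ⟨m1, m2⟩ := main
  have e1 : (Real.sqrt K * a)^2 = K * a^2 := by rw [mul_pow, hKsq]
  have e2 : (Real.sqrt K * b)^2 = K * b^2 := by rw [mul_pow, hKsq]
  have e3 : (Real.sqrt K * c)^2 = K * c^2 := by rw [mul_pow, hKsq]
  have e4 : Real.sqrt K * b * (Real.sqrt K * c) * Real.cos A = K * (b * c * Real.cos A) := by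
    linear_combination (b*c*Real.cos A) * hKsq
  constructor
  · have h1 : K * a^2 ≤ K * abar^2 := by
      rw [habar2]
      nlinarith [m1, e1, e2, e3, e4]
    exact le_of_mul_le_mul_left (by linarith) hK
  · have e5 : (1 + 2*(Real.sqrt K * b)^2) * (Real.sqrt K * a)^2
        = (1 + 2*K*b^2) * (K * a^2) := by
      rw [mul_pow, mul_pow, hKsq]; ring
    have h1 : K * abar^2 ≤ K * ((1 + 2*K*b^2) * a^2) := by
      rw [habar2]
      nlinarith [m2, e1, e2, e3, e4, e5]
    exact le_of_mul_le_mul_left (by linarith) hK
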